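/- Summation identity (equation f2b1): For all integers j₁ ≥ j₃ ≥ 0 and all a ∈ ℂ with 1 + a q^j ≠ 0 for 0 ≤ j < j₁, one has Σ_{j₂=j₃}^{j₁} (−1)^{j₂} q^{binom(j₁−j₂,2)} / ((q;q)_{j₁−j₂} (q;q)_{j₂−j₃} (−a;q)_{j₂}) = (−1)^{j₃} a^{j₁−j₃} q^{binom(j₁−j₃,2) + binom(j₁,2) − binom(j₃,2)} / ((−a;q)_{j₁} (q;q)_{j₁−j₃}), where binom(m,2) = m(m−1)/2. -/

import Mathlib

open Finset

noncomputable def qPoch (a q : ℂ) (n : ℕ) : ℂ :=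
  ∏ t ∈ Finset.range n, (1 - a * q ^ t)

noncomputable def qPochInf (a q : ℂ) : ℂ :=
  ∏' t : ℕ, (1 - a * q ^ t)

def IsBaileyPair (q a : ℂ) (α β : ℕ → ℂ) : Prop :=
  ∀ n : ℕ, β n =
    ∑ t ∈ Finset.range (n + 1), α t / (qPoch q q (n - t) * qPoch (a * q) q (n + t))


lemma qPoch_zero (a q : ℂ) : qPoch a q 0 = 1 := by simp [qPoch]

lemma qPoch_succ (a q : ℂ) (n : ℕ) : qPoch a q (n+1) = qPoch a q n * (1 - a * q ^ n) :=
  Finset.prod_range_succ _ _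

lemma qPoch_add (a q : ℂ) (m k : ℕ) :
    qPoch a q (m + k) = qPoch a q m * qPoch (a * q ^ m) q k := by
  rw [qPoch, qPoch, qPoch, Finset.prod_range_add]
  congr 1
  refine Finset.prod_congr rfl fun i _ => ?_
  rw [pow_add]; ring

lemma qPoch_succ' (a q : ℂ) (n : ℕ) : qPoch a q (n+1) = (1 - a) * qPoch (a * q) q n := by
  have h := qPoch_add a q 1 n
  rw [Nat.add_comm 1 n] at h
  rw [h, qPoch]
  simp [pow_one]

lemma one_sub_q_mul_pow_ne {q : ℂ} (hq1 : ‖q‖ < 1) (m : ℕ) :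
    (1:ℂ) - q * q ^ m ≠ 0 := by
  intro hc
  rw [sub_eq_zero] at hc
  have h1 : ‖q * q ^ m‖ < 1 := by
    rw [norm_mul, norm_pow]
    calc ‖q‖ * ‖q‖ ^ m ≤ ‖q‖ * 1 := by
          exact mul_le_mul_of_nonneg_left (pow_le_one₀ (norm_nonneg q) hq1.le)
            (norm_nonneg q)
      _ < 1 := by simpa using hq1
  rw [← hc] at h1
  simp at h1

lemma qPoch_q_ne_zero {q : ℂ} (hq1 : ‖q‖ < 1) (m : ℕ) : qPoch q q m ≠ 0 := by
  rw [qPoch]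
  exact Finset.prod_ne_zero_iff.mpr fun t _ => one_sub_q_mul_pow_ne hq1 t

lemma qPoch_ne_zero {b q : ℂ} {n : ℕ} (hb : ∀ t, t < n → 1 - b * q ^ t ≠ 0) :
    qPoch b q n ≠ 0 := by
  rw [qPoch]
  exact Finset.prod_ne_zero_iff.mpr fun t ht => hb t (Finset.mem_range.mp ht)

lemma choose2_succ (m : ℕ) : (m+1).choose 2 = m.choose 2 + m := by
  rw [Nat.choose_succ_succ, Nat.choose_one_right, Nat.add_comm]

lemma choose2_add (j n : ℕ) : (j+n).choose 2 = j.choose 2 + n.choose 2 + j*n := by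
  induction n with
  | zero => simp
  | succ n ih =>
    rw [show j + (n+1) = (j+n)+1 from rfl, choose2_succ, ih, choose2_succ]
    ring

lemma two_choose2 (m : ℕ) : m.choose 2 + m.choose 2 = m * (m - 1) := by
  cases m with
  | zero => rfl
  | succ m =>
    simp only [Nat.choose_two_right, Nat.succ_sub_one]
    obtain ⟨c, hc⟩ := Nat.even_mul_succ_self m
    rw [Nat.mul_comm (m+1) m, hc]
    omega

lemma core (q : ℂ) (hq1 : ‖q‖ < 1) (n : ℕ) (b : ℂ)
    (hb : ∀ t, t < n → 1 - b * q ^ t ≠ 0) :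
    ∑ k ∈ Finset.range (n+1), (-1 : ℂ)^k * q ^ ((n-k).choose 2) /
        (qPoch q q (n-k) * qPoch q q k * qPoch b q k)
      = (-1)^n * b^n * q^(n*(n-1)) / (qPoch b q n * qPoch q q n) := by
  induction n generalizing b with
  | zero => simp [qPoch]
  | succ n ih =>
    have hP : ∀ m, qPoch q q m ≠ 0 := qPoch_q_ne_zero hq1
    have hq' : (1:ℂ) - q * q^n ≠ 0 := one_sub_q_mul_pow_ne hq1 n
    have h1b : (1:ℂ) - b ≠ 0 := by simpa using hb 0 (Nat.succ_pos n)
    have hBn : qPoch b q n ≠ 0 := qPoch_ne_zero fun t ht => hb t (by omega)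
    have hBsn : qPoch b q (n+1) ≠ 0 := qPoch_ne_zero hb
    have hbn : (1:ℂ) - b * q ^ n ≠ 0 := hb n (Nat.lt_succ_self n)
    have hbq : ∀ t, t < n → 1 - (b*q) * q^t ≠ 0 := by
      intro t ht
      have h := hb (t+1) (by omega)
      have e : b * q^(t+1) = (b*q)*q^t := by ring
      rwa [e] at h
    have hBq : qPoch (b*q) q n ≠ 0 := qPoch_ne_zero hbq
    have hPn := hP n
    have key : ((1:ℂ) - q * q^n) * (∑ k ∈ Finset.range (n+2),
          (-1 : ℂ)^k * q ^ ((n+1-k).choose 2) /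
            (qPoch q q (n+1-k) * qPoch q q k * qPoch b q k))
        = q^n * (∑ k ∈ Finset.range (n+1), (-1 : ℂ)^k * q ^ ((n-k).choose 2) /
            (qPoch q q (n-k) * qPoch q q k * qPoch b q k))
          - (1-b)⁻¹ * (∑ k ∈ Finset.range (n+1), (-1 : ℂ)^k * q ^ ((n-k).choose 2) /
            (qPoch q q (n-k) * qPoch q q k * qPoch (b*q) q k)) := by
      rw [Finset.mul_sum]
      have step : ∀ k ∈ Finset.range (n+2),
          ((1:ℂ) - q * q^n) * ((-1 : ℂ)^k * q ^ ((n+1-k).choose 2) /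
            (qPoch q q (n+1-k) * qPoch q q k * qPoch b q k))
          = (if k ≤ n then q^n * ((-1 : ℂ)^k * q ^ ((n-k).choose 2) /
              (qPoch q q (n-k) * qPoch q q k * qPoch b q k)) else 0)
            + (if 1 ≤ k then (-1 : ℂ)^k * q ^ ((n+1-k).choose 2) /
              (qPoch q q (n+1-k) * qPoch q q (k-1) * qPoch b q k) else 0) := by
        intro k hk
        have hk2 : k ≤ n + 1 := by have := Finset.mem_range.mp hk; omega
        rcases Nat.eq_zero_or_pos k with rfl | hk1
        · rw [if_pos (Nat.zero_le n), if_neg (by norm_num), add_zero]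
          rw [Nat.sub_zero, Nat.sub_zero, choose2_succ, pow_add, qPoch_succ]
          simp only [qPoch_zero, mul_one, one_mul, pow_zero]
          rw [← mul_div_assoc, ← mul_div_assoc,
            div_eq_div_iff (mul_ne_zero hPn hq') hPn]
          ring
        · have hBk : qPoch b q k ≠ 0 := qPoch_ne_zero fun t ht => hb t (by omega)
          rcases eq_or_lt_of_le hk2 with rfl | hkn
          · rw [if_neg (by omega), if_pos (show 1 ≤ n+1 by omega), zero_add,
              Nat.sub_self, Nat.add_sub_cancel, qPoch_succ q q n]
            simp only [qPoch_zero, mul_one, one_mul, Nat.choose_zero_succ, pow_zero]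
            rw [← mul_div_assoc,
              div_eq_div_iff (mul_ne_zero (mul_ne_zero hPn hq') hBk)
                (mul_ne_zero hPn hBk)]
            ring
          · have hkn' : k ≤ n := by omega
            rw [if_pos hkn', if_pos (show 1 ≤ k from hk1)]
            obtain ⟨j, rfl⟩ : ∃ j, k = j + 1 := ⟨k - 1, by omega⟩
            obtain ⟨m, rfl⟩ : ∃ m, n = m + j + 1 := ⟨n - (j+1), by omega⟩
            have e1 : (1:ℂ) - q * q^m ≠ 0 := one_sub_q_mul_pow_ne hq1 m
            have e2 : (1:ℂ) - q * q^j ≠ 0 := one_sub_q_mul_pow_ne hq1 j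
            have p1 := hP m
            have p2 := hP j
            have e3 : q ^ (m+j+1) = q^m * q^j * q := by
              rw [pow_add, pow_add, pow_one]
            rw [show m + j + 1 + 1 - (j + 1) = m + 1 from by omega,
              show m + j + 1 - (j + 1) = m from by omega, Nat.add_sub_cancel,
              choose2_succ m, e3, pow_add, qPoch_succ q q m, qPoch_succ q q j]
            rw [← mul_div_assoc, ← mul_div_assoc,
              div_add_div _ _ (by apply_rules [mul_ne_zero]) (by apply_rules [mul_ne_zero]),
              div_eq_div_iff (by apply_rules [mul_ne_zero]) (by apply_rules [mul_ne_zero])]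
            ring
      rw [Finset.sum_congr rfl step, Finset.sum_add_distrib, sub_eq_add_neg]
      congr 1
      · rw [Finset.sum_range_succ, if_neg (by omega), add_zero, Finset.mul_sum]
        exact Finset.sum_congr rfl fun k hk =>
          if_pos (by have := Finset.mem_range.mp hk; omega)
      · rw [Finset.sum_range_succ', if_neg (by omega), add_zero, Finset.mul_sum,
          ← Finset.sum_neg_distrib]
        refine Finset.sum_congr rfl fun k hk => ?_
        have hkn : k ≤ n := by have := Finset.mem_range.mp hk; omega
        have p1 := hP (n - k)
        have p2 := hP k
        have p3 : qPoch (b*q) q k ≠ 0 :=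
          qPoch_ne_zero fun t ht => hbq t (by omega)
        rw [if_pos (show 1 ≤ k + 1 by omega), Nat.succ_sub_succ, Nat.add_sub_cancel,
          qPoch_succ' b q k, inv_mul_eq_div, div_div, ← neg_div,
          div_eq_div_iff (by apply_rules [mul_ne_zero]) (by apply_rules [mul_ne_zero])]
        ring
    have hrel : qPoch b q n * (1 - b * q ^ n) = (1 - b) * qPoch (b*q) q n :=
      (qPoch_succ b q n).symm.trans (qPoch_succ' b q n)
    have hR2 : (-1:ℂ)^n * (b*q)^n * q^(n*(n-1)) / (qPoch (b*q) q n * qPoch q q n)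
        = (-1:ℂ)^n * (b*q)^n * q^(n*(n-1)) * (1-b) /
          (qPoch b q n * (1 - b*q^n) * qPoch q q n) := by
      rw [div_eq_div_iff (mul_ne_zero hBq hPn)
        (mul_ne_zero (mul_ne_zero hBn hbn) hPn)]
      linear_combination ((-1:ℂ)^n * (b*q)^n * q^(n*(n-1)) * qPoch q q n) * hrel
    rw [qPoch_succ b q n, qPoch_succ q q n, Nat.add_sub_cancel,
      show (n+1) * n = n*(n-1) + (n+n) from by cases n with
        | zero => rfl
        | succ n => simp only [Nat.add_sub_cancel]; ring,
      pow_add]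
    refine mul_left_cancel₀ hq' ?_
    have d1 : qPoch b q n * (1 - b*q^n) * qPoch q q n * (1-b) ≠ 0 :=
      mul_ne_zero (mul_ne_zero (mul_ne_zero hBn hbn) hPn) h1b
    rw [key, ih b (fun t ht => hb t (by omega)), ih (b*q) hbq, hR2,
      ← mul_div_assoc, inv_mul_eq_div, div_div,
      div_sub_div _ _ (mul_ne_zero hBn hPn) d1,
      ← mul_div_assoc,
      div_eq_div_iff (mul_ne_zero (mul_ne_zero hBn hPn) d1)
        (mul_ne_zero (mul_ne_zero hBn hbn) (mul_ne_zero hPn hq'))]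
    ring

theorem eqn_f2b1 (q a : ℂ) (hq0 : 0 < ‖q‖) (hq1 : ‖q‖ < 1)
    (j1 j3 : ℕ) (h : j3 ≤ j1) (ha : ∀ j : ℕ, j < j1 → 1 + a * q ^ j ≠ 0) :
    ∑ j2 ∈ Finset.Icc j3 j1,
      (-1 : ℂ) ^ j2 * q ^ ((j1 - j2).choose 2) /
        (qPoch q q (j1 - j2) * qPoch q q (j2 - j3) * qPoch (-a) q j2) =
    (-1 : ℂ) ^ j3 * a ^ (j1 - j3) *
        q ^ ((j1 - j3).choose 2 + j1.choose 2 - j3.choose 2) /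
      (qPoch (-a) q j1 * qPoch q q (j1 - j3)) := by
  obtain ⟨n, rfl⟩ : ∃ n, j1 = j3 + n := ⟨j1 - j3, by omega⟩
  have hb : ∀ t, t < n → 1 - (-a * q ^ j3) * q ^ t ≠ 0 := by
    intro t ht
    have hx := ha (j3 + t) (by omega)
    have e : 1 + a * q ^ (j3 + t) = 1 - (-a * q^j3) * q^t := by rw [pow_add]; ring
    rwa [e] at hx
  have hcore := core q hq1 n (-a * q ^ j3) hb
  have hsgn : ((-1:ℂ))^n * (-a * q^j3)^n = a^n * (q^j3)^n := by
    rw [show ((-a) * q^j3 : ℂ) = (-1) * (a*q^j3) from by ring, mul_pow,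
      mul_pow a (q^j3) n, ← mul_assoc, ← mul_pow]
    norm_num
  rw [hsgn] at hcore
  rw [← Finset.Ico_add_one_right_eq_Icc, Finset.sum_Ico_eq_sum_range,
    show j3 + n + 1 - j3 = n + 1 from by omega]
  have hterm : ∀ k ∈ Finset.range (n+1),
      (-1:ℂ)^(j3+k) * q ^ ((j3+n-(j3+k)).choose 2) /
        (qPoch q q (j3+n-(j3+k)) * qPoch q q (j3+k-j3) * qPoch (-a) q (j3+k))
      = ((-1:ℂ)^j3 / qPoch (-a) q j3) *
        ((-1:ℂ)^k * q ^ ((n-k).choose 2) /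
          (qPoch q q (n-k) * qPoch q q k * qPoch (-a * q^j3) q k)) := by
    intro k hk
    rw [show j3+n-(j3+k) = n-k from by omega, show j3+k-j3 = k from by omega,
      qPoch_add, pow_add]
    ring
  rw [Finset.sum_congr rfl hterm, ← Finset.mul_sum, hcore,
    show j3 + n - j3 = n from by omega, qPoch_add (-a) q j3 n,
    show n.choose 2 + (j3+n).choose 2 - j3.choose 2 = n*(n-1) + j3*n from by
      have h1 := choose2_add j3 n
      have h2 := two_choose2 n
      omega,
    pow_add, pow_mul]
  ring
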